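/- For an S-sorted TRS R over a simple signature, the system of type-preserving weak innermost dependency pairs together with the usable rules is again an S-sorted TRS over a simple signature, where each marked symbol f♯ receives the arity and type of f, and each compound symbol c introduced for rule f(l₁,…,lₙ) → C[r₁,…,r_m] receives arity (type(r₁),…,type(r_m)) and type type(f). -/

import Mathlib

inductive Term (F V : Type) : Type
  | var : V → Term F V
  | fn : F → List (Term F V) → Term F V

namespace Term
variable {F V : Type}

mutual
  def size : Term F V → ℕ
    | .var _ => 1
    | .fn _ ts => 1 + sizeList ts
  def sizeList : List (Term F V) → ℕ
    | [] => 0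
    | t :: ts => size t + sizeList ts
end

mutual
  def depth : Term F V → ℕ
    | .var _ => 0
    | .fn _ ts => 1 + depthList ts
  def depthList : List (Term F V) → ℕ
    | [] => 0
    | t :: ts => max (depth t) (depthList ts)
end

mutual
  def width : Term F V → ℕ
    | .var _ => 1
    | .fn _ [] => 1
    | .fn _ (t :: ts) => max (ts.length + 1) (max (width t) (widthList ts))
  def widthList : List (Term F V) → ℕ
    | [] => 1
    | t :: ts => max (width t) (widthList ts)
end

mutual
  def bnorm : Term F V → ℕ
    | .var _ => 1
    | .fn _ ts => 1 + max ts.length (bnormList ts)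
  def bnormList : List (Term F V) → ℕ
    | [] => 0
    | t :: ts => max (bnorm t) (bnormList ts)
end

mutual
  def subst (σ : V → Term F V) : Term F V → Term F V
    | .var x => σ x
    | .fn f ts => .fn f (substList σ ts)
  def substList (σ : V → Term F V) : List (Term F V) → List (Term F V)
    | [] => []
    | t :: ts => subst σ t :: substList σ ts
end

/-- The equivalence on terms induced by an equivalence `eqv` on function symbols:
`s ≈ t` iff `s = t`, or the roots are equivalent and the arguments are pairwise
equivalent up to a permutation. -/
inductive TermEq (eqv : F → F → Prop) : Term F V → Term F V → Prop
  | refl (t) : TermEq eqv t t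
  | fn {f g : F} {ss ts : List (Term F V)} (hfg : eqv f g)
      (π : Fin ss.length → Fin ts.length) (hbij : Function.Bijective π)
      (h : ∀ i, TermEq eqv (ss.get i) (ts.get (π i))) :
      TermEq eqv (.fn f ss) (.fn g ts)

/-- The (reflexive) subterm relation. -/
inductive Subterm : Term F V → Term F V → Prop
  | refl (t) : Subterm t t
  | arg {s t : Term F V} {f : F} {ts : List (Term F V)} :
      t ∈ ts → Subterm s t → Subterm s (.fn f ts)

end Term

namespace Term
variable {S F V : Type}

/-- Well-typed terms over an `S`-sorted signature. -/
inductive WellTyped (ar : F → List S) (typeOf : F → S) (vsort : V → S) :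
    Term F V → S → Prop
  | var (x : V) : WellTyped ar typeOf vsort (.var x) (vsort x)
  | fn {f : F} {ts : List (Term F V)} (hlen : ts.length = (ar f).length)
      (h : ∀ i : Fin ts.length,
        WellTyped ar typeOf vsort (ts.get i) ((ar f).get (Fin.cast hlen i))) :
      WellTyped ar typeOf vsort (.fn f ts) (typeOf f)

/-- Simplicity of the constructor part of a sorted signature: for every
constructor `c : (s₁,…,sₙ) → s` each `sᵢ` has rank at most that of `s`, and at
most one `sᵢ` has rank equal to that of `s`. -/
def SimpleFor (ar : F → List S) (typeOf : F → S) (rank : S → ℕ)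
    (ctor : F → Prop) : Prop :=
  ∀ f : F, ctor f → (∀ s' ∈ ar f, rank s' ≤ rank (typeOf f)) ∧
    ((ar f).countP (fun s' => decide (rank s' = rank (typeOf f)))) ≤ 1

/-- `Decomp isDef r us` expresses `r = C[u₁,…,uₘ]` where the context `C`
contains no defined symbols and every `uᵢ` has defined root. -/
inductive Decomp (isDef : F → Prop) : Term F V → List (Term F V) → Prop
  | hole {f : F} {ts : List (Term F V)} (h : isDef f) :
      Decomp isDef (.fn f ts) [.fn f ts]
  | var (x : V) : Decomp isDef (.var x) []
  | node {f : F} {ts : List (Term F V)} {uss : List (List (Term F V))}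
      (hf : ¬ isDef f) (hlen : uss.length = ts.length)
      (h : ∀ i : Fin ts.length,
        Decomp isDef (ts.get i) (uss.get (Fin.cast hlen.symm i))) :
      Decomp isDef (.fn f ts) uss.flatten

end Term

/-- The extended signature: original symbols, marked symbols `f♯`, and compound
symbols, indexed by a rule together with the list of extracted subterms. -/
abbrev ExtSym (F V : Type) : Type :=
  F ⊕ (F ⊕ ((Term F V × Term F V) × List (Term F V)))

namespace Term
variable {F V : Type}

mutual
  /-- Embedding of terms into the extended signature. -/
  def emb : Term F V → Term (ExtSym F V) V
    | .var x => .var x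
    | .fn f ts => .fn (Sum.inl f) (embList ts)
  def embList : List (Term F V) → List (Term (ExtSym F V) V)
    | [] => []
    | t :: ts => emb t :: embList ts
end

/-- Marking the root symbol: `f(t₁,…,tₙ)♯ = f♯(t₁,…,tₙ)`. -/
def markT : Term F V → Term (ExtSym F V) V
  | .var x => .var x
  | .fn f ts => .fn (Sum.inr (Sum.inl f)) (embList ts)

end Term

namespace Term

variable {S F V : Type}

/-- The sort of the root of a term. -/
def rootType (typeOf : F → S) (vsort : V → S) : Term F V → S
  | .var x => vsort x
  | .fn f _ => typeOf f

open Classical in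
noncomputable def extAr (ar : F → List S) (typeOf : F → S) (vsort : V → S)
    (isDef : F → Prop) (R : Set (Term F V × Term F V)) : ExtSym F V → List S
  | Sum.inl f => ar f
  | Sum.inr (Sum.inl f) => ar f
  | Sum.inr (Sum.inr ((l, r), us)) =>
      if ((l, r) ∈ R ∧ Decomp isDef r us) then us.map (rootType typeOf vsort) else []

/-- The extended type function. -/
def extType (typeOf : F → S) (vsort : V → S) : ExtSym F V → S
  | Sum.inl f => typeOf f
  | Sum.inr (Sum.inl f) => typeOf f
  | Sum.inr (Sum.inr ((l, _), _)) => rootType typeOf vsort l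

lemma wt_rootType {ar : F → List S} {typeOf : F → S} {vsort : V → S}
    {t : Term F V} {s : S} (h : WellTyped ar typeOf vsort t s) :
    s = rootType typeOf vsort t := by cases h <;> rfl

lemma embList_eq_map (ts : List (Term F V)) : embList ts = ts.map emb := by
  induction ts with
  | nil => rfl
  | cons t ts ih => simp [embList, ih]

lemma wt_emb {ar : F → List S} {typeOf : F → S} {vsort : V → S}
    {isDef : F → Prop} {R : Set (Term F V × Term F V)}
    {t : Term F V} {s : S} (h : WellTyped ar typeOf vsort t s) :
    WellTyped (extAr ar typeOf vsort isDef R) (extType typeOf vsort) vsort (emb t) s := by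
  induction h with
  | var x => exact WellTyped.var x
  | @fn f ts hlen harg ih =>
    rw [show emb (Term.fn f ts) = Term.fn (Sum.inl f) (ts.map emb) by
      simp [emb, embList_eq_map]]
    have hlen' : (ts.map emb).length
        = (extAr ar typeOf vsort isDef R (Sum.inl f)).length := by
      simpa [extAr] using hlen
    exact WellTyped.fn hlen' (fun i => by
      have := ih ⟨i.1, by simpa using i.isLt⟩
      simp [extAr, List.get_eq_getElem] at this ⊢
      convert this using 2
      rfl)

lemma wt_markT {ar : F → List S} {typeOf : F → S} {vsort : V → S}
    {isDef : F → Prop} {R : Set (Term F V × Term F V)}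
    {t : Term F V} {s : S} (h : WellTyped ar typeOf vsort t s) :
    WellTyped (extAr ar typeOf vsort isDef R) (extType typeOf vsort) vsort (markT t) s := by
  cases h with
  | var x => exact WellTyped.var x
  | @fn f ts hlen harg =>
    rw [show markT (Term.fn f ts) = Term.fn (Sum.inr (Sum.inl f)) (ts.map emb) by
      simp [markT, embList_eq_map]]
    have hlen' : (ts.map emb).length
        = (extAr ar typeOf vsort isDef R (Sum.inr (Sum.inl f))).length := by
      simpa [extAr] using hlen
    exact WellTyped.fn hlen' (fun i => by
      have := wt_emb (isDef := isDef) (R := R) (harg ⟨i.1, by simpa using i.isLt⟩)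
      simp [extAr, List.get_eq_getElem] at this ⊢
      convert this using 2
      rfl)

lemma countP_eq_sum {α : Type*} (p : α → Bool) (l : List α) :
    l.countP p = ∑ i : Fin l.length, if p l[i] then 1 else 0 := by
  induction l with
  | nil => simp
  | cons a l ih =>
    rw [List.countP_cons, ih]
    simp only [List.length_cons]
    rw [Fin.sum_univ_succ]
    simp [Fin.getElem_fin, Nat.add_comm]
    by_cases h : p a = true <;> simp [h]

lemma sum_map_eq {α : Type*} (g : α → ℕ) (l : List α) :
    (l.map g).sum = ∑ i : Fin l.length, g l[i] := by
  induction l with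
  | nil => simp
  | cons a l ih =>
    rw [List.map_cons, List.sum_cons, ih]
    simp only [List.length_cons]
    rw [Fin.sum_univ_succ]
    simp [Fin.getElem_fin]

lemma decomp_wt {ar : F → List S} {typeOf : F → S} {vsort : V → S}
    {rank : S → ℕ} {isDef : F → Prop}
    (hsimple : SimpleFor ar typeOf rank (fun f => ¬ isDef f))
    {r : Term F V} {us : List (Term F V)} (hd : Decomp isDef r us) :
    ∀ s, WellTyped ar typeOf vsort r s →
      (∀ u ∈ us, WellTyped ar typeOf vsort u (rootType typeOf vsort u) ∧
        rank (rootType typeOf vsort u) ≤ rank s) ∧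
      us.countP (fun u => decide (rank (rootType typeOf vsort u) = rank s)) ≤ 1 := by
  induction hd with
  | @hole f ts hf =>
    intro s hs
    obtain rfl : s = typeOf f := wt_rootType hs
    refine ⟨?_, by simp only [List.countP_cons, List.countP_nil, Nat.zero_add]; split <;> omega⟩
    rintro u hu
    simp only [List.mem_singleton] at hu
    subst hu
    exact ⟨hs, le_refl _⟩
  | var x => intro s hs; simp
  | @node f ts uss hf hlen h ih =>
    intro s hs
    cases hs with
    | fn hlen' hargs =>
      have e : uss.length = (ar f).length := hlen.trans hlen'
      -- properties of each block
      have blk : ∀ j : Fin uss.length,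
          (∀ u ∈ uss[(j : ℕ)], WellTyped ar typeOf vsort u (rootType typeOf vsort u) ∧
            rank (rootType typeOf vsort u) ≤ rank ((ar f)[(j : ℕ)]'(e ▸ j.isLt))) ∧
          (uss[(j : ℕ)]).countP (fun u =>
            decide (rank (rootType typeOf vsort u) = rank ((ar f)[(j : ℕ)]'(e ▸ j.isLt)))) ≤ 1 := by
        intro j
        have := ih (Fin.cast hlen j) _ (hargs (Fin.cast hlen j))
        simpa [List.get_eq_getElem] using this
      have hrank : ∀ j : Fin uss.length,
          rank ((ar f)[(j : ℕ)]'(e ▸ j.isLt)) ≤ rank (typeOf f) :=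
        fun j => (hsimple f hf).1 _ (List.getElem_mem _)
      constructor
      · intro u hu
        rw [List.mem_flatten] at hu
        obtain ⟨l', hl', hul⟩ := hu
        obtain ⟨j, hj, rfl⟩ := List.mem_iff_getElem.mp hl'
        obtain ⟨h1, h2⟩ := (blk ⟨j, hj⟩).1 u hul
        exact ⟨h1, h2.trans (hrank ⟨j, hj⟩)⟩
      · have key : ∀ j : Fin uss.length,
            (uss[(j : ℕ)]).countP (fun u =>
              decide (rank (rootType typeOf vsort u) = rank (typeOf f)))
            ≤ if decide (rank ((ar f)[(j : ℕ)]'(e ▸ j.isLt)) = rank (typeOf f))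
                then 1 else 0 := by
          intro j
          by_cases hr : rank ((ar f)[(j : ℕ)]'(e ▸ j.isLt)) = rank (typeOf f)
          · simp only [hr, decide_true, if_true]
            have := (blk j).2
            rw [hr] at this
            exact this
          · rw [if_neg (by simpa using hr), Nat.le_zero, List.countP_eq_zero]
            intro u hu
            simp only [decide_eq_true_eq]
            intro habs
            obtain ⟨_, h2⟩ := (blk j).1 u hu
            exact hr (le_antisymm (hrank j) (habs ▸ h2))
        calc (uss.flatten).countP (fun u =>
              decide (rank (rootType typeOf vsort u) = rank (typeOf f)))
            = (uss.map (List.countP (fun u =>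
                decide (rank (rootType typeOf vsort u) = rank (typeOf f))))).sum := by
              rw [List.countP_flatten]
          _ = ∑ j : Fin uss.length, (uss[(j : ℕ)]).countP (fun u =>
                decide (rank (rootType typeOf vsort u) = rank (typeOf f))) :=
              sum_map_eq _ _
          _ ≤ ∑ j : Fin uss.length,
                if decide (rank ((ar f)[(j : ℕ)]'(e ▸ j.isLt)) = rank (typeOf f))
                  then 1 else 0 := Finset.sum_le_sum (fun j _ => key j)
          _ = ∑ j : Fin (ar f).length,
                if decide (rank ((ar f)[(j : ℕ)]) = rank (typeOf f)) then 1 else 0 :=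
              Fintype.sum_equiv (finCongr e) _ _ (fun j => rfl)
          _ = (ar f).countP (fun s' => decide (rank s' = rank (typeOf f))) := by
              rw [countP_eq_sum]
              simp [Fin.getElem_fin]
          _ ≤ 1 := (hsimple f hf).2

end Term

open Term

/-- For an `S`-sorted TRS `R` over a simple signature, the system of
type-preserving weak innermost dependency pairs together with the usable rules
is again an `S`-sorted TRS over a simple signature: the marked symbol `f♯`
receives the arity and type of `f`; each compound symbol `c` introduced for a
rule `f(l₁,…,lₙ) → C[r₁,…,rₘ]` receives arity `(type r₁,…,type rₘ)` and type
`type f`, making all dependency pairs and all (usable) rules well-typed, while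
the constructor part of the extended signature remains simple. -/
theorem tpwidp_sorted_simple {S F V : Type}
    (ar : F → List S) (typeOf : F → S) (vsort : V → S) (rank : S → ℕ)
    (isDef : F → Prop)
    (R : Set (Term F V × Term F V))
    (hsorted : ∀ p ∈ R, ∃ s : S,
      WellTyped ar typeOf vsort p.1 s ∧ WellTyped ar typeOf vsort p.2 s)
    (hsimple : SimpleFor ar typeOf rank (fun f => ¬ isDef f)) :
    ∃ (ar' : ExtSym F V → List S) (typeOf' : ExtSym F V → S),
      (∀ f : F, ar' (Sum.inl f) = ar f ∧ typeOf' (Sum.inl f) = typeOf f) ∧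
      (∀ f : F, ar' (Sum.inr (Sum.inl f)) = ar f ∧
        typeOf' (Sum.inr (Sum.inl f)) = typeOf f) ∧
      (∀ (l r : Term F V) (us : List (Term F V)) (f : F)
          (ls : List (Term F V)) (s : S),
        (l, r) ∈ R → l = Term.fn f ls → Decomp isDef r us →
        WellTyped ar typeOf vsort l s →
          typeOf' (Sum.inr (Sum.inr ((l, r), us))) = s ∧
          WellTyped ar' typeOf' vsort (markT l) s ∧
          WellTyped ar' typeOf' vsort
            (Term.fn (Sum.inr (Sum.inr ((l, r), us))) (us.map markT)) s) ∧
      (∀ p ∈ R, ∃ s : S,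
        WellTyped ar' typeOf' vsort (emb p.1) s ∧
        WellTyped ar' typeOf' vsort (emb p.2) s) ∧
      ∃ rank' : S → ℕ,
        SimpleFor ar' typeOf' rank'
          (fun f' => match f' with
            | Sum.inl f => ¬ isDef f
            | Sum.inr (Sum.inl _) => False
            | Sum.inr (Sum.inr _) => True) := by
  classical
  refine ⟨extAr ar typeOf vsort isDef R, extType typeOf vsort,
    fun f => ⟨rfl, rfl⟩, fun f => ⟨rfl, rfl⟩, ?_, ?_, rank, ?_⟩
  · -- dependency pairs are well-typed
    intro l r us f ls s hR hl hdec hwt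
    have hts : s = rootType typeOf vsort l := wt_rootType hwt
    refine ⟨hts.symm, wt_markT hwt, ?_⟩
    -- r is well-typed at s
    obtain ⟨s', hl', hr'⟩ := hsorted (l, r) hR
    have hr2 : WellTyped ar typeOf vsort r s := by
      have hss : s' = s := (wt_rootType hl').trans hts.symm
      exact hss ▸ hr' 
    have hAr : extAr ar typeOf vsort isDef R (Sum.inr (Sum.inr ((l, r), us)))
        = us.map (rootType typeOf vsort) := if_pos ⟨hR, hdec⟩
    have hTy : extType typeOf vsort (Sum.inr (Sum.inr ((l, r), us))) = s := hts.symm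
    have hdw := decomp_wt (vsort := vsort) hsimple hdec s hr2
    rw [← hTy]
    have hlen : (us.map markT).length
        = (extAr ar typeOf vsort isDef R (Sum.inr (Sum.inr ((l, r), us)))).length := by
      simp [hAr]
    refine WellTyped.fn hlen (fun i => ?_)
    have hi : (i : ℕ) < us.length := by simpa using i.isLt
    have hmem : us[(i : ℕ)] ∈ us := List.getElem_mem _
    have hwtu := (hdw.1 _ hmem).1
    have harri : (extAr ar typeOf vsort isDef R
        (Sum.inr (Sum.inr ((l, r), us)))).get (Fin.cast hlen i)
        = rootType typeOf vsort us[(i : ℕ)] := by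
      simp [hAr, List.get_eq_getElem]
    rw [harri]
    have : (us.map markT).get i = markT us[(i : ℕ)] := by
      simp [List.get_eq_getElem]
    rw [this]
    exact wt_markT hwtu
  · -- rules remain well-typed
    intro p hp
    obtain ⟨s, h1, h2⟩ := hsorted p hp
    exact ⟨s, wt_emb h1, wt_emb h2⟩
  · -- simplicity
    rintro (f | f | ⟨⟨l, r⟩, us⟩) hctor
    · exact hsimple f hctor
    · exact absurd hctor (by simp)
    · by_cases hg : (l, r) ∈ R ∧ Decomp isDef r us
      · have hAr : extAr ar typeOf vsort isDef R (Sum.inr (Sum.inr ((l, r), us)))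
            = us.map (rootType typeOf vsort) := if_pos hg
        obtain ⟨s, hl', hr'⟩ := hsorted (l, r) hg.1
        have hts : s = rootType typeOf vsort l := wt_rootType hl'
        have hTy : extType typeOf vsort (Sum.inr (Sum.inr ((l, r), us))) = s := hts.symm
        have hdw := decomp_wt (vsort := vsort) hsimple hg.2 s hr'
        rw [hAr, hTy]
        constructor
        · intro s' hs'
          obtain ⟨u, hu, rfl⟩ := List.mem_map.mp hs'
          exact (hdw.1 u hu).2
        · rw [List.countP_map]
          exact hdw.2
      · have hAr : extAr ar typeOf vsort isDef R (Sum.inr (Sum.inr ((l, r), us)))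
            = [] := if_neg hg
        rw [hAr]
        simp
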